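/- Let x(t), y(t) ∈ ℂ[t]/(tⁿ) with x(t)y(t) = 1, writing x(t) = Σ xᵢtⁱ, y(t) = Σ yᵢtⁱ. Then under the change of coordinates (y₀,...,y_{n−1}) ↦ (x₀,...,x_{n−1}) determined by inversion in ℂ[t]/(tⁿ), the pullback of the n-form dy₀∧dy₁∧...∧dy_{n−1} equals ((−1)ⁿ / x₀^{2n}) dx₀∧...∧dx_{n−1}. -/

import Mathlib

open Polynomial

noncomputable section
namespace JacInv
open Finset

variable (n : ℕ)

/-- Extend a tuple of `n` coefficients to a function on `ℕ` (zero beyond `n`). -/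
def pad (x : Fin n → ℂ) : ℕ → ℂ := fun m => if h : m < n then x ⟨m, h⟩ else 0

lemma pad_zero (hn : 0 < n) (x : Fin n → ℂ) : pad n x 0 = x ⟨0, hn⟩ := by simp [pad, hn]

lemma pad_add (x y : Fin n → ℂ) (m : ℕ) : pad n (x + y) m = pad n x m + pad n y m := by
  unfold pad; split <;> simp

lemma pad_smul (c : ℂ) (x : Fin n → ℂ) (m : ℕ) : pad n (c • x) m = c * pad n x m := by
  unfold pad; split <;> simp

/-- Truncated convolution on coefficient tuples. -/
def conv (a b : Fin n → ℂ) : Fin n → ℂ :=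
  fun k => ∑ j ∈ Finset.range ((k : ℕ) + 1), pad n a j * pad n b ((k : ℕ) - j)

lemma refl_sum (f g : ℕ → ℂ) (k : ℕ) :
    ∑ j ∈ Finset.range (k+1), f j * g (k - j)
      = ∑ j ∈ Finset.range (k+1), f (k - j) * g j := by
  rw [← Finset.sum_range_reflect]
  apply Finset.sum_congr rfl
  intro j hj
  rw [Finset.mem_range] at hj
  have h1 : k + 1 - 1 - j = k - j := by omega
  have h2 : k - (k - j) = j := by omega
  rw [h1, h2]

lemma conv_comm (a b : Fin n → ℂ) : conv n a b = conv n b a := by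
  funext k
  unfold conv
  rw [refl_sum]
  exact Finset.sum_congr rfl fun j _ => mul_comm _ _

/-- Multiplication by `a` in the truncated ring as a linear map. -/
def TL (a : Fin n → ℂ) : (Fin n → ℂ) →ₗ[ℂ] (Fin n → ℂ) where
  toFun b := conv n a b
  map_add' b c := by
    funext k
    show conv n a (b + c) k = conv n a b k + conv n a c k
    unfold conv
    rw [← Finset.sum_add_distrib]
    exact Finset.sum_congr rfl fun j _ => by rw [pad_add]; ring
  map_smul' c b := by
    funext k
    show conv n a (c • b) k = c * conv n a b k
    unfold conv
    rw [Finset.mul_sum]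
    exact Finset.sum_congr rfl fun j _ => by rw [pad_smul]; ring

lemma det_TL (hn : 0 < n) (a : Fin n → ℂ) : LinearMap.det (TL n a) = (a ⟨0, hn⟩) ^ n := by
  classical
  rw [← LinearMap.det_toMatrix (Pi.basisFun ℂ (Fin n))]
  have hM : ∀ i j : Fin n, (LinearMap.toMatrix (Pi.basisFun ℂ (Fin n)) (Pi.basisFun ℂ (Fin n)) (TL n a)) i j
      = if (j : ℕ) ≤ (i : ℕ) then pad n a ((i : ℕ) - (j : ℕ)) else 0 := by
    intro i j
    rw [LinearMap.toMatrix_apply]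
    simp only [Pi.basisFun_repr, Pi.basisFun_apply]
    show conv n a (Pi.single j 1) i = _
    unfold conv
    have hpad : ∀ m : ℕ, pad n (Pi.single j (1:ℂ)) m = if m = (j : ℕ) then 1 else 0 := by
      intro m
      unfold pad
      split
      · rename_i h
        rw [Pi.single_apply]
        congr 1
        simp [Fin.ext_iff]
      · rename_i h
        have : m ≠ (j:ℕ) := by omega
        simp [this]
    by_cases hji : (j : ℕ) ≤ (i : ℕ)
    · rw [if_pos hji]
      rw [Finset.sum_eq_single ((i:ℕ) - (j:ℕ))]
      · rw [hpad]
        have : (i:ℕ) - ((i:ℕ) - (j:ℕ)) = (j:ℕ) := by omega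
        rw [this, if_pos rfl, mul_one]
      · intro b hb hne
        rw [hpad]
        rw [Finset.mem_range] at hb
        have : (i:ℕ) - b ≠ (j:ℕ) := by omega
        rw [if_neg this, mul_zero]
      · intro h
        exfalso; apply h; rw [Finset.mem_range]; omega
    · rw [if_neg hji]
      apply Finset.sum_eq_zero
      intro b hb
      rw [Finset.mem_range] at hb
      rw [hpad]
      have : (i:ℕ) - b ≠ (j:ℕ) := by omega
      rw [if_neg this, mul_zero]
  rw [Matrix.det_of_lowerTriangular]
  · have hdiag : ∀ i : Fin n, (LinearMap.toMatrix (Pi.basisFun ℂ (Fin n)) (Pi.basisFun ℂ (Fin n)) (TL n a)) i i = a ⟨0, hn⟩ := by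
      intro i
      rw [hM i i, if_pos le_rfl]
      simp [pad, hn]
    rw [Finset.prod_congr rfl (fun i _ => hdiag i)]
    simp
  · intro i j hij
    rw [hM]
    simp only [OrderDual.toDual_lt_toDual] at hij
    rw [if_neg (by exact_mod_cast not_le.2 (by exact_mod_cast hij))]

/-- `a ↦ (multiplication by a)` as a linear map into continuous linear maps. -/
def TLL : (Fin n → ℂ) →ₗ[ℂ] ((Fin n → ℂ) →L[ℂ] (Fin n → ℂ)) where
  toFun a := LinearMap.toContinuousLinearMap (TL n a)
  map_add' a b := by
    ext v k
    show conv n (a + b) v k = conv n a v k + conv n b v k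
    rw [conv_comm n (a+b) v, conv_comm n a v, conv_comm n b v]
    have := congrFun ((TL n v).map_add a b) k
    exact this
  map_smul' c a := by
    ext v k
    show conv n (c • a) v k = c * conv n a v k
    rw [conv_comm n (c • a) v, conv_comm n a v]
    have := congrFun ((TL n v).map_smul c a) k
    exact this

def Bc : (Fin n → ℂ) →L[ℂ] ((Fin n → ℂ) →L[ℂ] (Fin n → ℂ)) :=
  LinearMap.toContinuousLinearMap (TLL n)

lemma Bc_apply (a b : Fin n → ℂ) : Bc n a b = conv n a b := rfl

/-- The explicit recursive inverse of a power series. -/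
def ginv (x : ℕ → ℂ) : ℕ → ℂ
  | 0 => (x 0)⁻¹
  | (k+1) => -(x 0)⁻¹ * ∑ j : Fin (k+1), x (k+1 - (j:ℕ)) * ginv x j

lemma eq_ginv (x y : ℕ → ℂ) (hx : x 0 ≠ 0) (N : ℕ)
    (h : ∀ k ≤ N, ∑ j ∈ Finset.range (k+1), x (k - j) * y j = if k = 0 then 1 else 0) :
    ∀ k ≤ N, y k = ginv x k := by
  intro k
  induction k using Nat.strong_induction_on with
  | _ k ih =>
    intro hk
    match k with
    | 0 =>
      have h0 := h 0 (by omega)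
      simp at h0
      rw [ginv]
      field_simp
      linear_combination h0
    | (m+1) =>
      have hm := h (m+1) hk
      rw [if_neg (by omega)] at hm
      rw [Finset.sum_range_succ] at hm
      simp only [Nat.sub_self] at hm
      rw [ginv]
      have hsum : ∑ j ∈ Finset.range (m+1), x (m+1 - j) * y j
          = ∑ j : Fin (m+1), x (m+1 - (j:ℕ)) * ginv x j := by
        rw [Finset.sum_range fun j => x (m+1-j) * y j]
        apply Finset.sum_congr rfl
        intro j _
        rw [ih j (by omega) (by omega)]
      rw [hsum] at hm
      field_simp
      linear_combination hm

lemma diff_pad (m : ℕ) : Differentiable ℂ (fun z : Fin n → ℂ => pad n z m) := by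
  unfold pad
  split
  · exact fun z => (differentiable_pi.1 differentiable_id _) z
  · exact differentiable_const 0

lemma diff_ginv (hn : 0 < n) (x : Fin n → ℂ) (hx : x ⟨0, hn⟩ ≠ 0) :
    ∀ k, DifferentiableAt ℂ (fun z : Fin n → ℂ => ginv (pad n z) k) x := by
  have h0 : DifferentiableAt ℂ (fun z : Fin n → ℂ => (pad n z 0)⁻¹) x := by
    apply DifferentiableAt.inv
    · exact (diff_pad n 0) x
    · rw [pad_zero n hn]; exact hx
  intro k
  induction k using Nat.strong_induction_on with
  | _ k ih =>
    match k with
    | 0 => simp only [ginv]; exact h0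
    | (m+1) =>
      simp only [ginv]
      apply DifferentiableAt.mul
      · exact h0.neg
      · apply DifferentiableAt.fun_sum
        intro j _
        exact ((diff_pad n _) x).mul (ih j j.isLt)

lemma coeff_P (x : Fin n → ℂ) (m : ℕ) :
    (∑ i : Fin n, C (x i) * X ^ (i : ℕ)).coeff m = pad n x m := by
  rw [Polynomial.finset_sum_coeff]
  simp only [Polynomial.coeff_C_mul, Polynomial.coeff_X_pow]
  unfold pad
  split
  · rename_i h
    rw [Finset.sum_eq_single (⟨m, h⟩ : Fin n)]
    · simp
    · intro b _ hb
      have : m ≠ (b : ℕ) := fun hc => hb (by simp [Fin.ext_iff, ← hc])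
      simp [this]
    · simp
  · rename_i h
    apply Finset.sum_eq_zero
    intro i _
    have : m ≠ (i : ℕ) := by omega
    simp [this]

lemma coeff_eq (x y : Fin n → ℂ)
    (h : (Ideal.Quotient.mk (Ideal.span {(X : Polynomial ℂ) ^ n}))
        ((∑ i : Fin n, C (x i) * X ^ (i : ℕ)) * (∑ i : Fin n, C (y i) * X ^ (i : ℕ))) = 1) :
    ∀ k < n, ∑ j ∈ Finset.range (k+1), pad n x j * pad n y (k - j)
      = if k = 0 then 1 else 0 := by
  intro k hk
  have h1 : (Ideal.Quotient.mk (Ideal.span {(X : Polynomial ℂ) ^ n}))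
      ((∑ i : Fin n, C (x i) * X ^ (i : ℕ)) * (∑ i : Fin n, C (y i) * X ^ (i : ℕ)))
      = (Ideal.Quotient.mk (Ideal.span {(X : Polynomial ℂ) ^ n})) 1 := by
    rw [h, map_one]
  rw [Ideal.Quotient.eq, Ideal.mem_span_singleton] at h1
  rw [Polynomial.X_pow_dvd_iff] at h1
  have h2 := h1 k hk
  rw [Polynomial.coeff_sub, sub_eq_zero] at h2
  rw [Polynomial.coeff_mul, Finset.Nat.sum_antidiagonal_eq_sum_range_succ_mk] at h2
  simp only [coeff_P] at h2
  rw [h2]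
  simp [Polynomial.coeff_one, eq_comm]

end JacInv
end

open JacInv

/-- Inversion in ℂ[t]/(tⁿ): if `ι` sends the coefficient tuple of `x(t)` to that of its
inverse `y(t)` (i.e. `x(t)·y(t) = 1` in ℂ[t]/(tⁿ)), then the Jacobian determinant of `ι`
(i.e. the factor in the pullback of `dy₀∧…∧dy_{n−1}` against `dx₀∧…∧dx_{n−1}`)
equals `(−1)ⁿ / x₀^{2n}`. -/
theorem jacobian_of_inversion_form (n : ℕ) (hn : 0 < n)
    (ι : (Fin n → ℂ) → (Fin n → ℂ))
    (hinv : ∀ x : Fin n → ℂ, x ⟨0, hn⟩ ≠ 0 →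
      (Ideal.Quotient.mk (Ideal.span {(X : Polynomial ℂ) ^ n}))
        ((∑ i : Fin n, C (x i) * X ^ (i : ℕ)) *
          (∑ i : Fin n, C (ι x i) * X ^ (i : ℕ))) = 1)
    (x : Fin n → ℂ) (hx : x ⟨0, hn⟩ ≠ 0) :
    LinearMap.det (fderiv ℂ ι x).toLinearMap
      = (-1) ^ n * (x ⟨0, hn⟩)⁻¹ ^ (2 * n) := by
  classical
  set x0 := x ⟨0, hn⟩ with hx0def
  -- the open set where the leading coefficient is nonzero
  have hU : IsOpen {z : Fin n → ℂ | z ⟨0, hn⟩ ≠ 0} :=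
    isOpen_ne.preimage (continuous_apply (⟨0, hn⟩ : Fin n))
  have hxU : x ∈ {z : Fin n → ℂ | z ⟨0, hn⟩ ≠ 0} := hx
  -- coefficient equations
  have heq : ∀ z : Fin n → ℂ, z ⟨0, hn⟩ ≠ 0 → ∀ k < n,
      ∑ j ∈ Finset.range (k+1), pad n z j * pad n (ι z) (k - j) = if k = 0 then 1 else 0 :=
    fun z hz => coeff_eq n z (ι z) (hinv z hz)
  -- ι agrees with the explicit recursive inverse on the open set
  have hmatch : ∀ z ∈ {z : Fin n → ℂ | z ⟨0, hn⟩ ≠ 0},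
      ι z = fun i : Fin n => ginv (pad n z) (i : ℕ) := by
    intro z hz
    funext i
    have key := eq_ginv (pad n z) (pad n (ι z))
      (by rw [pad_zero n hn]; exact hz) (n - 1)
      (fun k hk => by rw [← refl_sum]; exact heq z hz k (by omega)) (i : ℕ) (by omega)
    rw [← key]
    unfold pad
    rw [dif_pos i.isLt]
  have hev : ι =ᶠ[nhds x] (fun z => fun i : Fin n => ginv (pad n z) (i : ℕ)) :=
    Filter.eventuallyEq_of_mem (hU.mem_nhds hxU) hmatch
  have hFd : DifferentiableAt ℂ (fun z => fun i : Fin n => ginv (pad n z) (i : ℕ)) x :=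
    differentiableAt_pi.2 fun i => diff_ginv n hn x hx (i : ℕ)
  have hι : HasFDerivAt ι (fderiv ℂ ι x) x := by
    rw [hev.fderiv_eq]
    exact hFd.hasFDerivAt.congr_of_eventuallyEq hev
  set D := fderiv ℂ ι x with hD
  -- differentiate the identity conv z (ι z) = e
  have hbb : IsBoundedBilinearMap ℂ (fun p : (Fin n → ℂ) × (Fin n → ℂ) => conv n p.1 p.2) := by
    have h := ContinuousLinearMap.isBoundedBilinearMap (Bc n)
    exact h
  have hcomp : HasFDerivAt (fun z : Fin n → ℂ => conv n z (ι z))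
      ((hbb.deriv (x, ι x)).comp ((ContinuousLinearMap.id ℂ (Fin n → ℂ)).prod D)) x := by
    have h1 := hbb.hasFDerivAt (x, ι x)
    have h2 : HasFDerivAt (fun z : Fin n → ℂ => (z, ι z))
        ((ContinuousLinearMap.id ℂ (Fin n → ℂ)).prod D) x := HasFDerivAt.prodMk (hasFDerivAt_id x) hι
    exact h1.comp x h2
  have hconst : HasFDerivAt (fun z : Fin n → ℂ => conv n z (ι z)) (0 : (Fin n → ℂ) →L[ℂ] (Fin n → ℂ)) x := by
    apply (hasFDerivAt_const (fun k : Fin n => if (k : ℕ) = 0 then (1:ℂ) else 0) x).congr_of_eventuallyEq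
    filter_upwards [hU.mem_nhds hxU] with z hz
    funext k
    show conv n z (ι z) k = _
    unfold conv
    exact heq z hz (k : ℕ) k.isLt
  have hzero := hcomp.unique hconst
  have hrel : ∀ v : Fin n → ℂ, conv n x (D v) + conv n v (ι x) = 0 := by
    intro v
    have := congrArg (fun (L : (Fin n → ℂ) →L[ℂ] (Fin n → ℂ)) => L v) hzero
    simp only [ContinuousLinearMap.comp_apply, ContinuousLinearMap.prod_apply,
      ContinuousLinearMap.coe_id', id_eq, ContinuousLinearMap.zero_apply] at this
    rw [hbb.deriv_apply] at this
    exact this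
  -- linear map identity and determinants
  have hlin : (TL n x) ∘ₗ D.toLinearMap = (-1 : ℂ) • TL n (ι x) := by
    apply LinearMap.ext
    intro v
    have h := hrel v
    show conv n x (D v) = ((-1 : ℂ) • TL n (ι x)) v
    have : ((-1 : ℂ) • TL n (ι x)) v = -(conv n (ι x) v) := by
      simp [TL]
    rw [this, conv_comm n (ι x) v]
    linear_combination h
  have hdet := congrArg LinearMap.det hlin
  rw [LinearMap.det_comp, LinearMap.det_smul, det_TL n hn, det_TL n hn] at hdet
  have hrank : Module.finrank ℂ (Fin n → ℂ) = n := by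
    rw [Module.finrank_pi]; exact Fintype.card_fin n
  rw [hrank] at hdet
  -- the constant coefficient of the inverse
  have hy0 : ι x ⟨0, hn⟩ = x0⁻¹ := by
    have h0 := heq x hx 0 hn
    rw [Finset.sum_range_one] at h0
    rw [Nat.sub_zero, pad_zero n hn, pad_zero n hn] at h0
    norm_num at h0
    field_simp
    linear_combination h0
  rw [hy0] at hdet
  -- conclude
  have hxn : x0 ^ n ≠ 0 := pow_ne_zero n hx
  apply mul_left_cancel₀ hxn
  rw [hdet]
  have : x0 ^ n * ((-1 : ℂ) ^ n * x0⁻¹ ^ (2 * n)) = (-1) ^ n * (x0 ^ n * (x0⁻¹ ^ n * x0⁻¹ ^ n)) := by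
    rw [two_mul, pow_add]; ring
  rw [this]
  have hcancel : x0 ^ n * (x0⁻¹ ^ n * x0⁻¹ ^ n) = x0⁻¹ ^ n := by
    rw [← mul_assoc, ← mul_pow, mul_inv_cancel₀ hx, one_pow, one_mul]
  rw [hcancel]
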